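/- For any positive integers m, n and nonnegative integers a_1, ..., a_m, the polynomial ([a_1+⋯+a_m+1]_q! / ([a_1]_q! ⋯ [a_m]_q!)) · ∑_{h=0}^{n-1} q^h ∏_{i=1}^m [h choose a_i]_q is divisible by [n]_q = 1 + q + ⋯ + q^{n-1} in the ring ℤ[q]. -/

import Mathlib

open Polynomial Finset

/-- The q-integer `[n]_q = 1 + q + ⋯ + q^{n-1}` as a polynomial in `ℤ[q]`. -/
noncomputable def qint (n : ℕ) : Polynomial ℤ := ∑ i ∈ Finset.range n, X ^ i

/-- The q-factorial `[n]_q! = [n]_q [n-1]_q ⋯ [1]_q`. -/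
noncomputable def qfact : ℕ → Polynomial ℤ
  | 0 => 1
  | n + 1 => qint (n + 1) * qfact n

/-- The Gaussian (q-)binomial coefficient `[n choose k]_q` as a polynomial in `ℤ[q]`,
defined by the q-Pascal recurrence; it equals `∏_{i=1}^k (1-q^{n-i+1})/(1-q^i)` for
`0 ≤ k ≤ n` and `0` otherwise. -/
noncomputable def qbinom : ℕ → ℕ → Polynomial ℤ
  | _, 0 => 1
  | 0, _ + 1 => 0
  | n + 1, k + 1 => qbinom n k + X ^ (k + 1) * qbinom n (k + 1)

/-- `[n]_q` divides `([a_1+⋯+a_m+1]_q!/([a_1]_q!⋯[a_m]_q!)) ∑_{h<n} q^h ∏ [h choose a_i]_q`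
in `ℤ[q]`.  Since the prefactor is the polynomial `[a_1+⋯+a_m+1]_q!` divided by the (nonzero)
polynomial `∏ [a_i]_q!`, this is equivalently stated by multiplying through by `∏ [a_i]_q!`. -/

lemma qbinom_zero (n : ℕ) : qbinom n 0 = 1 := by cases n <;> rfl

lemma qbinom_zero_left (k : ℕ) : qbinom 0 (k+1) = 0 := rfl

lemma pascal (n k : ℕ) : qbinom (n+1) (k+1) = qbinom n k + X ^ (k+1) * qbinom n (k+1) := rfl

lemma qbinom_eq_zero : ∀ {n k : ℕ}, n < k → qbinom n k = 0 := by
  intro n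
  induction n with
  | zero => intro k hk; cases k with
    | zero => omega
    | succ j => rfl
  | succ n ih =>
    intro k hk
    cases k with
    | zero => omega
    | succ j =>
      rw [pascal, ih (by omega), ih (by omega)]
      ring

lemma qbinom_self : ∀ n : ℕ, qbinom n n = 1 := by
  intro n
  induction n with
  | zero => rfl
  | succ n ih => rw [pascal, ih, qbinom_eq_zero (by omega)]; ring

lemma qint_succ (n : ℕ) : qint (n+1) = 1 + X * qint n := by
  simp only [qint, Finset.mul_sum, ← pow_succ']
  rw [Finset.sum_range_succ' (fun i => (X:Polynomial ℤ) ^ i)]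
  ring

lemma qint_succ' (n : ℕ) : qint (n+1) = qint n + X ^ n := by
  simp [qint, Finset.sum_range_succ]

lemma qint_add (p q : ℕ) : qint (p + q) = qint p + X ^ p * qint q := by
  simp only [qint, Finset.mul_sum, ← pow_add]
  rw [Finset.sum_range_add (fun i => (X:Polynomial ℤ) ^ i)]

lemma qbinom_one (n : ℕ) : qbinom n 1 = qint n := by
  induction n with
  | zero => rfl
  | succ n ih =>
    rw [show (1:ℕ) = 0 + 1 from rfl, pascal, qbinom_zero, ih, qint_succ]
    ring

lemma pascal' : ∀ (n k : ℕ), qbinom (n+1) (k+1) = X ^ (n-k) * qbinom n k + qbinom n (k+1) := by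
  intro n
  induction n with
  | zero =>
    intro k
    cases k with
    | zero => simp [pascal, qbinom_zero, qbinom_zero_left]
    | succ j => simp [pascal, qbinom_zero_left]
  | succ n ih =>
    intro k
    cases k with
    | zero =>
      rw [pascal, qbinom_zero]
      simp only [Nat.sub_zero, zero_add, qbinom_one]
      rw [pow_one, ← qint_succ (n+1), qint_succ' (n+1)]
      ring
    | succ j =>
      rcases le_or_gt (j+1) (n+1) with hle | hlt
      · rcases eq_or_lt_of_le hle with heq | hlt2
        · have hj : j = n := by omega
          subst hj
          simp [qbinom_self, qbinom_eq_zero (show j+1 < j+1+1 by omega), Nat.sub_self]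
        · have hjn : j + 1 ≤ n := by omega
          rw [pascal (n+1) (j+1)]
          conv_lhs => rw [ih j, ih (j+1)]
          conv_rhs => rw [pascal n j, pascal n (j+1)]
          have h4 : (X:Polynomial ℤ) ^ (j+1+1) * X ^ (n - (j+1)) = X ^ (n+1) := by
            rw [← pow_add]; congr 1; omega
          have h5 : (X:Polynomial ℤ) ^ (n-j) * X ^ (j+1) = X ^ (n+1) := by
            rw [← pow_add]; congr 1; omega
          have h6 : n + 1 - (j+1) = n - j := by omega
          rw [h6]
          calc X ^ (n - j) * qbinom n j + qbinom n (j + 1) +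
              X ^ (j + 1 + 1) * (X ^ (n - (j + 1)) * qbinom n (j + 1) + qbinom n (j + 1 + 1))
              = X ^ (n - j) * qbinom n j +
                ((X ^ (j+1+1) * X ^ (n - (j+1))) * qbinom n (j+1) + qbinom n (j+1)) +
                X ^ (j+1+1) * qbinom n (j+1+1) := by ring
            _ = X ^ (n - j) * qbinom n j + ((X^(n-j) * X^(j+1)) * qbinom n (j+1) + qbinom n (j+1)) +
                X ^ (j+1+1) * qbinom n (j+1+1) := by rw [h4, h5]
            _ = X ^ (n - j) * (qbinom n j + X ^ (j + 1) * qbinom n (j + 1)) +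
                (qbinom n (j + 1) + X ^ (j + 1 + 1) * qbinom n (j + 1 + 1)) := by ring
      · rw [qbinom_eq_zero (show n+1 < j+1 by omega), qbinom_eq_zero (show n+1 < j+2 by omega),
          qbinom_eq_zero (show n+1+1 < j+1+1 by omega)]
        simp

lemma qint_zero : qint 0 = 0 := by simp [qint]

lemma qfact_succ (n : ℕ) : qfact (n+1) = qint (n+1) * qfact n := rfl

lemma qfact_mul_qbinom : ∀ (n k : ℕ), qfact k * qbinom n k = ∏ i ∈ range k, qint (n - i) := by
  intro n
  induction n with
  | zero =>
    intro k
    cases k with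
    | zero => simp [qbinom_zero, qfact]
    | succ j =>
      rw [qbinom_zero_left, mul_zero]
      exact (Finset.prod_eq_zero (Finset.mem_range.mpr (show 0 < j+1 by omega))
        (by simp [qint_zero])).symm
  | succ n ih =>
    intro k
    cases k with
    | zero => simp [qbinom_zero, qfact]
    | succ j =>
      rw [pascal, qfact_succ, mul_add]
      have e1 : qint (j+1) * qfact j * qbinom n j = qint (j+1) * ∏ i ∈ range j, qint (n-i) := by
        rw [mul_assoc, ih j]
      have e2 : qint (j+1) * qfact j * (X^(j+1) * qbinom n (j+1)) =
          X^(j+1) * ((∏ i ∈ range j, qint (n-i)) * qint (n-j)) := by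
        rw [← qfact_succ, ← Finset.prod_range_succ (fun i => qint (n-i)), ← ih (j+1)]
        ring
      rw [e1, e2]
      have target : ∏ i ∈ range (j+1), qint (n+1-i)
          = (∏ i ∈ range j, qint (n-i)) * qint (n+1) := by
        rw [Finset.prod_range_succ' (fun i => qint (n+1-i))]
        simp only [Nat.sub_zero]
        congr 1
        exact Finset.prod_congr rfl (fun i _ => by congr 1; omega)
      rw [target]
      rcases le_or_gt j n with hjn | hnj
      · have : qint (n+1) = qint (j+1) + X^(j+1) * qint (n-j) := by
          rw [← qint_add]; congr 1; omega
        rw [this]; ring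
      · have hz : (∏ i ∈ range j, qint (n-i)) = 0 :=
          Finset.prod_eq_zero (Finset.mem_range.mpr hnj) (by simp [Nat.sub_self, qint_zero])
        rw [hz]; ring

lemma qfact_peel (m : ℕ) : ∀ j : ℕ, qfact (m + j) = qfact m * ∏ i ∈ range j, qint (m + j - i) := by
  intro j
  induction j with
  | zero => simp
  | succ j ih =>
    rw [show m + (j+1) = (m + j) + 1 by omega, qfact_succ, ih,
      Finset.prod_range_succ' (fun i => qint (m + j + 1 - i))]
    simp only [Nat.sub_zero]
    have hp : (∏ i ∈ range j, qint (m+j+1-(i+1))) = ∏ i ∈ range j, qint (m+j-i) :=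
      Finset.prod_congr rfl (fun i _ => by congr 1; omega)
    rw [hp]
    ring

lemma fact' (j m : ℕ) : qbinom (j+m) j * (qfact j * qfact m) = qfact (j+m) := by
  have h1 := qfact_mul_qbinom (j+m) j
  have h2 : qfact (j + m) = qfact m * ∏ i ∈ range j, qint (m + j - i) := by
    rw [show j + m = m + j by omega]; exact qfact_peel m j
  have h3 : (∏ i ∈ range j, qint (j + m - i)) = ∏ i ∈ range j, qint (m + j - i) :=
    Finset.prod_congr rfl (fun i _ => by rw [show j + m = m + j by omega])
  calc qbinom (j+m) j * (qfact j * qfact m) = (qfact j * qbinom (j+m) j) * qfact m := by ring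
    _ = (∏ i ∈ range j, qint (m + j - i)) * qfact m := by rw [h1, h3]
    _ = qfact (j+m) := by rw [h2]; ring

lemma qint_ne_zero {n : ℕ} (h : 1 ≤ n) : qint n ≠ 0 := by
  intro hc
  have : (qint n).eval 1 = (n : ℤ) := by simp [qint, Polynomial.eval_finset_sum]
  rw [hc] at this
  simp at this
  omega

lemma qfact_ne_zero (n : ℕ) : qfact n ≠ 0 := by
  induction n with
  | zero => simp [qfact]
  | succ n ih => exact mul_ne_zero (qint_ne_zero (by omega)) ih

lemma hockey (a : ℕ) : ∀ n : ℕ, ∑ h ∈ range n, X ^ h * qbinom h a = X ^ a * qbinom n (a+1) := by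
  intro n
  induction n with
  | zero => simp [qbinom_zero_left]
  | succ n ih =>
    rw [Finset.sum_range_succ, ih, pascal' n a]
    rcases le_or_gt a n with h | h
    · rw [mul_add, ← mul_assoc, ← pow_add, show a + (n - a) = n by omega]; ring
    · rw [qbinom_eq_zero h]; ring

lemma tri (a m c : ℕ) : qbinom (a+m) a * qbinom m c = qbinom (a+m) (a+c) * qbinom (a+c) a := by
  rcases le_or_gt c m with hcm | hmc
  · have hC : qfact a * (qfact c * qfact (m-c)) ≠ 0 :=
      mul_ne_zero (qfact_ne_zero a) (mul_ne_zero (qfact_ne_zero c) (qfact_ne_zero (m-c)))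
    apply mul_right_cancel₀ hC
    have e1 : qbinom m c * (qfact c * qfact (m-c)) = qfact m := by
      have := fact' c (m-c); rwa [show c + (m-c) = m by omega] at this
    have e2 : qbinom (a+m) a * (qfact a * qfact m) = qfact (a+m) := fact' a m
    have e3 : qbinom (a+c) a * (qfact a * qfact c) = qfact (a+c) := fact' a c
    have e4 : qbinom (a+m) (a+c) * (qfact (a+c) * qfact (m-c)) = qfact (a+m) := by
      have := fact' (a+c) (m-c); rwa [show (a+c) + (m-c) = a+m by omega] at this
    linear_combination (qbinom (a+m) a * qfact a) * e1 + e2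
      - (qbinom (a+m) (a+c) * qfact (m-c)) * e3 - e4
  · rw [qbinom_eq_zero hmc, qbinom_eq_zero (show a+m < a+c by omega)]
    ring

lemma qv (M : ℕ) : ∀ N r : ℕ, qbinom (M + N) r
    = ∑ k ∈ range (r+1), X ^ ((M-k)*(r-k)) * (qbinom M k * qbinom N (r-k)) := by
  intro N
  induction N with
  | zero =>
    intro r
    rw [Finset.sum_eq_single_of_mem r (self_mem_range_succ r)]
    · simp [Nat.sub_self, qbinom_zero]
    · intro k hk hkr
      have hk' : k < r := by simp only [Finset.mem_range] at hk; omega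
      rw [show r - k = (r-k-1)+1 by omega, qbinom_zero_left]
      ring
  | succ N ih =>
    intro r
    cases r with
    | zero => simp [qbinom_zero]
    | succ t =>
      rw [show M + (N+1) = (M+N)+1 by omega, pascal' (M+N) t, ih t, ih (t+1)]
      rw [Finset.sum_range_succ
        (fun k => X^((M-k)*(t+1-k)) * (qbinom M k * qbinom (N+1) (t+1-k))) (t+1)]
      rw [Finset.sum_range_succ
        (fun k => X^((M-k)*(t+1-k)) * (qbinom M k * qbinom N (t+1-k))) (t+1)]
      simp only [Nat.sub_self, Nat.mul_zero, pow_zero, one_mul, qbinom_zero, mul_one]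
      have key : ∀ k ∈ range (t+1),
          X^((M-k)*(t+1-k)) * (qbinom M k * qbinom (N+1) (t+1-k))
            = X^(M+N-t) * (X^((M-k)*(t-k)) * (qbinom M k * qbinom N (t-k)))
              + X^((M-k)*(t+1-k)) * (qbinom M k * qbinom N (t+1-k)) := by
        intro k hk
        have hk' : k ≤ t := by simp only [Finset.mem_range] at hk; omega
        rw [show t+1-k = (t-k)+1 by omega, pascal' N (t-k)]
        rcases le_or_gt k M with hkM | hkM
        · rcases le_or_gt (t-k) N with htN | htN
          · have hexp : (M-k)*(t-k+1) + (N-(t-k)) = (M+N-t) + (M-k)*(t-k) := by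
              rw [Nat.mul_succ]
              generalize (M-k)*(t-k) = w
              omega
            have hpow : (X:Polynomial ℤ)^((M-k)*(t-k+1)) * X^(N-(t-k))
                = X^(M+N-t) * X^((M-k)*(t-k)) := by
              rw [← pow_add, ← pow_add, hexp]
            linear_combination (qbinom M k * qbinom N (t-k)) * hpow
          · rw [qbinom_eq_zero htN]; ring
        · rw [qbinom_eq_zero hkM]; ring
      rw [Finset.sum_congr rfl key, Finset.sum_add_distrib, ← Finset.mul_sum]
      ring

lemma vdm (h a b : ℕ) : qbinom h a * qbinom h b = ∑ k ∈ range (b+1),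
    X^((a-k)*(b-k)) * (qbinom a k * (qbinom (a+(b-k)) a * qbinom h (a+(b-k)))) := by
  rcases le_or_gt a h with hah | hha
  · have hh : h = a + (h - a) := by omega
    conv_lhs => rw [hh]
    rw [qv a (h-a) b, Finset.mul_sum]
    apply Finset.sum_congr rfl
    intro k hk
    have ht := tri a (h-a) (b-k)
    calc qbinom (a+(h-a)) a * (X^((a-k)*(b-k)) * (qbinom a k * qbinom (h-a) (b-k)))
        = X^((a-k)*(b-k)) * (qbinom a k * (qbinom (a+(h-a)) a * qbinom (h-a) (b-k))) := by ring
      _ = X^((a-k)*(b-k)) * (qbinom a k *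
            (qbinom (a+(h-a)) (a+(b-k)) * qbinom (a+(b-k)) a)) := by rw [ht]
      _ = X^((a-k)*(b-k)) * (qbinom a k * (qbinom (a+(b-k)) a * qbinom h (a+(b-k)))) := by
          rw [← hh]; ring
  · rw [qbinom_eq_zero hha, zero_mul]
    symm
    apply Finset.sum_eq_zero
    intro k hk
    rw [qbinom_eq_zero (show h < a+(b-k) by omega)]
    ring

lemma kd (a b s k : ℕ) (hka : k ≤ a) (hkb : k ≤ b) :
    qfact (a + (b + s) + 1) * (qbinom (a+(b-k)) a * (qbinom a k * qfact (a+(b-k))))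
    = (qfact a * (qfact b * qfact ((a+(b-k)) + s + 1)))
      * (qbinom (a + (b + s) + 1) k * (qbinom (a+(b-k)) a * qbinom (a+(b-k)) b)) := by
  have hC : qfact k * (qfact (a-k) * qfact (b-k)) ≠ 0 :=
    mul_ne_zero (qfact_ne_zero k) (mul_ne_zero (qfact_ne_zero (a-k)) (qfact_ne_zero (b-k)))
  apply mul_right_cancel₀ hC
  have e1 : qbinom a k * (qfact k * qfact (a-k)) = qfact a := by
    have := fact' k (a-k); rwa [show k + (a-k) = a by omega] at this
  have e2 : qbinom (a+(b-k)) a * (qfact a * qfact (b-k)) = qfact (a+(b-k)) := fact' a (b-k)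
  have e3 : qbinom (a+(b+s)+1) k * (qfact k * qfact ((a+(b-k))+s+1)) = qfact (a+(b+s)+1) := by
    have := fact' k ((a+(b-k))+s+1); rwa [show k + ((a+(b-k))+s+1) = a+(b+s)+1 by omega] at this
  have e4 : qbinom (a+(b-k)) b * (qfact b * qfact (a-k)) = qfact (a+(b-k)) := by
    have := fact' b (a-k); rwa [show b + (a-k) = a+(b-k) by omega] at this
  linear_combination
    (qfact (a+(b+s)+1) * (qbinom (a+(b-k)) a * (qfact (a+(b-k)) * qfact (b-k)))) * e1
    + (qfact (a+(b+s)+1) * qfact (a+(b-k))) * e2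
    - (qfact a * (qfact b * (qbinom (a+(b-k)) a * (qbinom (a+(b-k)) b
        * (qfact (a-k) * qfact (b-k)))))) * e3
    - (qfact (a+(b+s)+1) * (qfact b * (qbinom (a+(b-k)) b * qfact (a-k)))) * e2
    - (qfact (a+(b+s)+1) * qfact (a+(b-k))) * e4

lemma main : ∀ (L : ℕ) (l : List ℕ), l.length ≤ L → ∀ n : ℕ,
    qint n * (l.map qfact).prod ∣
      qfact (l.sum + 1) * ∑ h ∈ range n, X ^ h * (l.map (qbinom h)).prod := by
  intro L
  induction L with
  | zero =>
    intro l hl n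
    have hnil : l = [] := List.length_eq_zero_iff.mp (by omega)
    subst hnil
    simp only [List.map_nil, List.prod_nil, List.sum_nil, mul_one]
    have hs : ∑ h ∈ range n, (X:Polynomial ℤ) ^ h = qint n := rfl
    rw [hs]
    exact dvd_mul_left _ _
  | succ L ih =>
    intro l hl n
    match l with
    | [] =>
      simp only [List.map_nil, List.prod_nil, List.sum_nil, mul_one]
      have hs : ∑ h ∈ range n, (X:Polynomial ℤ) ^ h = qint n := rfl
      rw [hs]
      exact dvd_mul_left _ _
    | [a] =>
      simp only [List.map_cons, List.map_nil, List.prod_cons, List.prod_nil, List.sum_cons,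
        List.sum_nil, mul_one, Nat.add_zero]
      rw [hockey a n]
      have h1 : qfact (a+1) * qbinom n (a+1) = qint n * (qfact a * qbinom (n-1) a) := by
        rw [qfact_mul_qbinom n (a+1), qfact_mul_qbinom (n-1) a,
          Finset.prod_range_succ' (fun i => qint (n - i))]
        simp only [Nat.sub_zero]
        have hp : (∏ i ∈ range a, qint (n-(i+1))) = ∏ i ∈ range a, qint (n-1-i) :=
          Finset.prod_congr rfl (fun i _ => by congr 1; omega)
        rw [hp]
        ring
      exact ⟨X^a * qbinom (n-1) a, by linear_combination X^a * h1⟩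
    | a :: b :: t =>
      simp only [List.map_cons, List.prod_cons, List.sum_cons]
      have hsum : ∑ h ∈ range n, X^h * (qbinom h a * (qbinom h b * (t.map (qbinom h)).prod))
          = ∑ k ∈ range (b+1), (X^((a-k)*(b-k)) * (qbinom a k * qbinom (a+(b-k)) a))
              * ∑ h ∈ range n, X^h * (qbinom h (a+(b-k)) * (t.map (qbinom h)).prod) := by
        have h1 : ∀ h ∈ range n, X^h * (qbinom h a * (qbinom h b * (t.map (qbinom h)).prod))
            = ∑ k ∈ range (b+1), (X^((a-k)*(b-k)) * (qbinom a k * qbinom (a+(b-k)) a))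
                * (X^h * (qbinom h (a+(b-k)) * (t.map (qbinom h)).prod)) := by
          intro h _
          rw [show X^h * (qbinom h a * (qbinom h b * (t.map (qbinom h)).prod))
              = (qbinom h a * qbinom h b) * (X^h * (t.map (qbinom h)).prod) from by ring,
            vdm h a b, Finset.sum_mul]
          exact Finset.sum_congr rfl (fun k _ => by ring)
        rw [Finset.sum_congr rfl h1, Finset.sum_comm]
        exact Finset.sum_congr rfl (fun k _ => by rw [Finset.mul_sum])
      rw [hsum, Finset.mul_sum]
      apply Finset.dvd_sum
      intro k hk
      have hkb : k ≤ b := by simp only [Finset.mem_range] at hk; omega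
      rcases le_or_gt k a with hka | hak
      · have IH := ih ((a+(b-k)) :: t) (by
          simp only [List.length_cons] at hl ⊢
          omega) n
        simp only [List.map_cons, List.prod_cons, List.sum_cons] at IH
        have hkd := kd a b t.sum k hka hkb
        have hdvd2 : qfact a * (qfact b * qfact ((a+(b-k)) + t.sum + 1))
            ∣ qfact (a + (b + t.sum) + 1)
                * (qbinom (a+(b-k)) a * (qbinom a k * qfact (a+(b-k)))) := ⟨_, hkd⟩
        have hmul := mul_dvd_mul hdvd2 IH
        have hC : qfact (a+(b-k)) * qfact ((a+(b-k)) + t.sum + 1) ≠ 0 :=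
          mul_ne_zero (qfact_ne_zero _) (qfact_ne_zero _)
        rw [← mul_dvd_mul_iff_right hC]
        have harr1 : qint n * (qfact a * (qfact b * (t.map qfact).prod))
              * (qfact (a+(b-k)) * qfact ((a+(b-k)) + t.sum + 1))
            = (qfact a * (qfact b * qfact ((a+(b-k)) + t.sum + 1)))
              * (qint n * (qfact (a+(b-k)) * (t.map qfact).prod)) := by ring
        have harr2 : qfact (a + (b + t.sum) + 1)
              * ((X^((a-k)*(b-k)) * (qbinom a k * qbinom (a+(b-k)) a))
                * ∑ h ∈ range n, X^h * (qbinom h (a+(b-k)) * (t.map (qbinom h)).prod))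
              * (qfact (a+(b-k)) * qfact ((a+(b-k)) + t.sum + 1))
            = X^((a-k)*(b-k)) *
              ((qfact (a + (b + t.sum) + 1)
                  * (qbinom (a+(b-k)) a * (qbinom a k * qfact (a+(b-k)))))
                * (qfact ((a+(b-k)) + t.sum + 1)
                  * ∑ h ∈ range n, X^h * (qbinom h (a+(b-k)) * (t.map (qbinom h)).prod))) := by
          ring
        rw [harr1, harr2]
        exact Dvd.dvd.mul_left hmul _
      · rw [qbinom_eq_zero hak]
        simp


theorem stmt1 (m n : ℕ) (hm : 1 ≤ m) (hn : 1 ≤ n) (a : Fin m → ℕ) :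
    qint n * ∏ i, qfact (a i) ∣
      qfact (∑ i, a i + 1) * ∑ h ∈ Finset.range n, X ^ h * ∏ i, qbinom h (a i) := by
  have h := main m (List.ofFn a) (by simp) n
  simpa [List.map_ofFn, List.prod_ofFn, List.sum_ofFn, Function.comp] using h
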